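/- For 0 < ε < 1/4, the intermediate map V₂₁ between Λ₁ and Λ₂ (Pauli channels with eigenvalues λ_x^{(1)} = λ_z^{(1)} = 1−2ε, λ_y^{(1)} = 1−4ε and λ_x^{(2)} = λ_z^{(2)} = 1−4ε+8ε², λ_y^{(2)} = (1−4ε)²) has Pauli eigenvalues μ_x = μ_z = (1−4ε+8ε²)/(1−2ε) and μ_y = 1−4ε, and the smallest eigenvalue of its Choi matrix is ζ(ε) = (1 − 2μ_x + μ_y)/4 = (1/4)·(1 − 2(1−4ε+8ε²)/(1−2ε) + (1−4ε)), which is strictly negative for all 0 < ε < 1/4. -/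

import Mathlib

open Matrix Complex ComplexOrder

abbrev Mat (d : ℕ) := Matrix (Fin d) (Fin d) ℂ

/-- The extension `I_n ⊗ Λ` of a matrix map `Λ` by the identity on a first tensor factor. -/
def matExt {α β : Type*} [Fintype α] [Fintype β] (n : ℕ)
    (Λ : Matrix α α ℂ → Matrix β β ℂ)
    (A : Matrix (Fin n × α) (Fin n × α) ℂ) :
    Matrix (Fin n × β) (Fin n × β) ℂ :=
  fun p q => Λ (fun k l => A (p.1, k) (q.1, l)) p.2 q.2

/-- The extension `Λ ⊗ I` of a matrix map `Λ` by the identity on a second tensor factor. -/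
def extSecond {α β : Type*} [Fintype α] [Fintype β] (n : ℕ)
    (Λ : Matrix α α ℂ → Matrix β β ℂ)
    (A : Matrix (α × Fin n) (α × Fin n) ℂ) :
    Matrix (β × Fin n) (β × Fin n) ℂ :=
  fun p q => Λ (fun k l => A (k, p.2) (l, q.2)) p.1 q.1

/-- A matrix map is positive if it preserves positive semidefiniteness. -/
def IsPosMap {α β : Type*} [Fintype α] [Fintype β]
    (Λ : Matrix α α ℂ → Matrix β β ℂ) : Prop :=
  ∀ A, A.PosSemidef → (Λ A).PosSemidef

/-- Complete positivity: every identity extension preserves positive semidefiniteness. -/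
def IsCP {α β : Type*} [Fintype α] [Fintype β]
    (Λ : Matrix α α ℂ → Matrix β β ℂ) : Prop :=
  ∀ (n : ℕ) (A : Matrix (Fin n × α) (Fin n × α) ℂ),
    A.PosSemidef → (matExt n Λ A).PosSemidef

/-- Trace preservation. -/
def IsTP {α β : Type*} [Fintype α] [Fintype β]
    (Λ : Matrix α α ℂ → Matrix β β ℂ) : Prop :=
  ∀ A, (Λ A).trace = A.trace

def IsCPTP {α β : Type*} [Fintype α] [Fintype β]
    (Λ : Matrix α α ℂ → Matrix β β ℂ) : Prop :=
  IsCP Λ ∧ IsTP Λ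

/-- The trace norm `‖A‖₁ = Tr √(AᴴA)`. -/
noncomputable def traceNorm {m : Type*} [Fintype m] [DecidableEq m] (A : Matrix m m ℂ) : ℝ :=
  (((Matrix.posSemidef_conjTranspose_mul_self A).isHermitian.eigenvectorUnitary : Matrix m m ℂ) *
    diagonal (((↑) : ℝ → ℂ) ∘ (√·) ∘ (Matrix.posSemidef_conjTranspose_mul_self A).isHermitian.eigenvalues) *
    (star (Matrix.posSemidef_conjTranspose_mul_self A).isHermitian.eigenvectorUnitary :
      Matrix m m ℂ)).trace.re

/-- The `n`-fold tensor power `Λ^{⊗n}` of a linear matrix map. -/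
noncomputable def tensorPow {d : ℕ} (n : ℕ) (Λ : Mat d → Mat d)
    (A : Matrix (Fin n → Fin d) (Fin n → Fin d) ℂ) :
    Matrix (Fin n → Fin d) (Fin n → Fin d) ℂ :=
  fun p q => ∑ i : Fin n → Fin d, ∑ j : Fin n → Fin d,
    A i j * ∏ k, Λ (Matrix.single (i k) (j k) 1) (p k) (q k)

/-- The (normalized) Choi matrix `(I ⊗ Λ)(|φ₊⟩⟨φ₊|)`. -/
noncomputable def choi {d : ℕ} (Λ : Mat d → Mat d) :
    Matrix (Fin d × Fin d) (Fin d × Fin d) ℂ :=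
  fun p q => (1 / (d : ℂ)) * Λ (Matrix.single p.1 q.1 1) p.2 q.2

noncomputable def σX : Mat 2 := !![0, 1; 1, 0]
noncomputable def σY : Mat 2 := !![0, -Complex.I; Complex.I, 0]
noncomputable def σZ : Mat 2 := !![1, 0; 0, -1]

/-- The single-collision channel Λ₁. -/
noncomputable def Lam1 (ε : ℝ) (ρ : Mat 2) : Mat 2 :=
  ((1 - 2*ε : ℝ) : ℂ) • ρ + ((ε : ℝ) : ℂ) • (σZ * ρ * σZ + σX * ρ * σX)

/-- The two-collision channel Λ₂. -/
noncomputable def Lam2 (ε : ℝ) (ρ : Mat 2) : Mat 2 :=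
  (((1 - 2*ε)^2 + 4*ε^2 : ℝ) : ℂ) • ρ +
    ((2*ε*(1 - 2*ε) : ℝ) : ℂ) • (σZ * ρ * σZ + σX * ρ * σX)

/-- A general qubit Pauli map. -/
noncomputable def pauliMap (q0 qx qy qz : ℝ) (ρ : Mat 2) : Mat 2 :=
  (q0 : ℂ) • ρ + (qx : ℂ) • (σX * ρ * σX) + (qy : ℂ) • (σY * ρ * σY) + (qz : ℂ) • (σZ * ρ * σZ)

/-- The qubit state with Bloch vector `(x, y, z)`. -/
noncomputable def bloch (x y z : ℝ) : Mat 2 :=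
  (1/2 : ℂ) • !![1 + (z : ℂ), (x : ℂ) - Complex.I * (y : ℂ);
                 (x : ℂ) + Complex.I * (y : ℂ), 1 - (z : ℂ)]

/-- The coarse-grained state `λ(ρ ⊗ ρ)` of a qubit with Bloch `z`-component `rz`. -/
noncomputable def cg (rz : ℝ) : Mat 2 :=
  !![(((1 + rz)^2 / 4 : ℝ) : ℂ), 0;
     0, (((1 - rz)^2 / 4 + (1 - rz^2) / 2 : ℝ) : ℂ)]

section Aux
variable (ε : ℝ)

lemma lam1_X : Lam1 ε σX = ((1 - 2*ε : ℝ) : ℂ) • σX := by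
  unfold Lam1
  ext i j
  fin_cases i <;> fin_cases j <;>
    simp [σX, σZ, Matrix.mul_apply, Fin.sum_univ_two] <;> push_cast <;> ring

lemma lam1_Y : Lam1 ε σY = ((1 - 4*ε : ℝ) : ℂ) • σY := by
  unfold Lam1
  ext i j
  fin_cases i <;> fin_cases j <;>
    simp [σX, σY, σZ, Matrix.mul_apply, Fin.sum_univ_two] <;> push_cast <;> ring

lemma lam1_Z : Lam1 ε σZ = ((1 - 2*ε : ℝ) : ℂ) • σZ := by
  unfold Lam1
  ext i j
  fin_cases i <;> fin_cases j <;>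
    simp [σX, σZ, Matrix.mul_apply, Fin.sum_univ_two] <;> push_cast <;> ring

lemma lam1_one : Lam1 ε 1 = 1 := by
  unfold Lam1
  ext i j
  fin_cases i <;> fin_cases j <;>
    simp [σX, σZ, Matrix.mul_apply, Fin.sum_univ_two, Matrix.one_apply] <;>
      push_cast <;> ring

lemma lam2_X : Lam2 ε σX = ((1 - 4*ε + 8*ε^2 : ℝ) : ℂ) • σX := by
  unfold Lam2
  ext i j
  fin_cases i <;> fin_cases j <;>
    simp [σX, σZ, Matrix.mul_apply, Fin.sum_univ_two] <;> push_cast <;> ring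

lemma lam2_Y : Lam2 ε σY = (((1 - 4*ε)^2 : ℝ) : ℂ) • σY := by
  unfold Lam2
  ext i j
  fin_cases i <;> fin_cases j <;>
    simp [σX, σY, σZ, Matrix.mul_apply, Fin.sum_univ_two] <;> push_cast <;> ring

lemma lam2_Z : Lam2 ε σZ = ((1 - 4*ε + 8*ε^2 : ℝ) : ℂ) • σZ := by
  unfold Lam2
  ext i j
  fin_cases i <;> fin_cases j <;>
    simp [σX, σZ, Matrix.mul_apply, Fin.sum_univ_two] <;> push_cast <;> ring

lemma lam2_one : Lam2 ε 1 = 1 := by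
  unfold Lam2
  ext i j
  fin_cases i <;> fin_cases j <;>
    simp [σX, σZ, Matrix.mul_apply, Fin.sum_univ_two, Matrix.one_apply] <;>
      push_cast <;> ring

lemma E00_eq : Matrix.single (0 : Fin 2) (0 : Fin 2) (1 : ℂ)
    = (1/2 : ℂ) • ((1 : Mat 2) + σZ) := by
  ext i j
  fin_cases i <;> fin_cases j <;>
    simp [σZ, Matrix.single, Matrix.one_apply] <;> norm_num

lemma E11_eq : Matrix.single (1 : Fin 2) (1 : Fin 2) (1 : ℂ)
    = (1/2 : ℂ) • ((1 : Mat 2) - σZ) := by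
  ext i j
  fin_cases i <;> fin_cases j <;>
    simp [σZ, Matrix.single, Matrix.one_apply] <;> norm_num

lemma E01_eq : Matrix.single (0 : Fin 2) (1 : Fin 2) (1 : ℂ)
    = (1/2 : ℂ) • (σX + Complex.I • σY) := by
  ext i j
  fin_cases i <;> fin_cases j <;>
    simp [σX, σY, Matrix.single] <;> norm_num [Complex.I_mul_I] <;> ring_nf <;>
      simp [Complex.I_mul_I]

lemma E10_eq : Matrix.single (1 : Fin 2) (0 : Fin 2) (1 : ℂ)
    = (1/2 : ℂ) • (σX - Complex.I • σY) := by
  ext i j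
  fin_cases i <;> fin_cases j <;>
    simp [σX, σY, Matrix.single] <;> norm_num [Complex.I_mul_I] <;> ring_nf <;>
      simp [Complex.I_mul_I]

lemma zeta_le_eps (ε : ℝ) (h1 : 0 < ε) (h2 : ε < 1/4) :
    ((1 - 2*((1 - 4*ε + 8*ε^2)/(1 - 2*ε)) + (1 - 4*ε))/4 : ℝ) ≤ ε := by
  have hd2 : (0:ℝ) < 1 - 2*ε := by linarith
  have hm : (1-4*ε : ℝ) ≤ (1 - 4*ε + 8*ε^2)/(1 - 2*ε) := by
    rw [le_div_iff₀ hd2]; nlinarith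
  linarith

lemma zeta_le_q0 (ε : ℝ) (h1 : 0 < ε) (h2 : ε < 1/4) :
    ((1 - 2*((1 - 4*ε + 8*ε^2)/(1 - 2*ε)) + (1 - 4*ε))/4 : ℝ)
      ≤ (1 + 2*((1 - 4*ε + 8*ε^2)/(1 - 2*ε)) + (1 - 4*ε))/4 := by
  have hd2 : (0:ℝ) < 1 - 2*ε := by linarith
  have hm0 : (0:ℝ) ≤ (1 - 4*ε + 8*ε^2)/(1 - 2*ε) := by
    apply div_nonneg _ hd2.le
    nlinarith [sq_nonneg (4*ε - 1)]
  linarith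

end Aux

set_option maxHeartbeats 2000000

/-- for `0 < ε < 1/4`, the intermediate map `V₂₁` (any linear map with
`Λ₂ = V₂₁ ∘ Λ₁`) has Pauli eigenvalues `μ_x = μ_z = (1−4ε+8ε²)/(1−2ε)` and `μ_y = 1−4ε`,
and the smallest eigenvalue of its Choi matrix is `ζ(ε) = (1 − 2μ_x + μ_y)/4 < 0`. -/
theorem intermediate_map_choi_negative_eigenvalue (ε : ℝ) (h1 : 0 < ε) (h2 : ε < 1/4)
    (V : Mat 2 → Mat 2) (hlin : IsLinearMap ℂ V)
    (hV : ∀ ρ : Mat 2, Lam2 ε ρ = V (Lam1 ε ρ)) :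
    V σX = (((1 - 4*ε + 8*ε^2)/(1 - 2*ε) : ℝ) : ℂ) • σX ∧
    V σY = ((1 - 4*ε : ℝ) : ℂ) • σY ∧
    V σZ = (((1 - 4*ε + 8*ε^2)/(1 - 2*ε) : ℝ) : ℂ) • σZ ∧
    (∃ v : Fin 2 × Fin 2 → ℂ, v ≠ 0 ∧
      (choi V) *ᵥ v =
        (((1 - 2*((1 - 4*ε + 8*ε^2)/(1 - 2*ε)) + (1 - 4*ε))/4 : ℝ) : ℂ) • v) ∧
    (∀ μ : ℝ, (∃ w : Fin 2 × Fin 2 → ℂ, w ≠ 0 ∧ (choi V) *ᵥ w = (μ : ℂ) • w) →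
      ((1 - 2*((1 - 4*ε + 8*ε^2)/(1 - 2*ε)) + (1 - 4*ε))/4 : ℝ) ≤ μ) ∧
    ((1 - 2*((1 - 4*ε + 8*ε^2)/(1 - 2*ε)) + (1 - 4*ε))/4 : ℝ) < 0 := by
  have hd2 : (0:ℝ) < 1 - 2*ε := by linarith
  have hd4 : (0:ℝ) < 1 - 4*ε := by linarith
  have hne2 : ((1 - 2*ε : ℝ) : ℂ) ≠ 0 := Complex.ofReal_ne_zero.mpr (ne_of_gt hd2)
  have hne4 : ((1 - 4*ε : ℝ) : ℂ) ≠ 0 := Complex.ofReal_ne_zero.mpr (ne_of_gt hd4)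
  have h2c : (1:ℂ) - 2*(ε:ℂ) ≠ 0 := by
    have := Complex.ofReal_ne_zero.mpr (ne_of_gt hd2)
    push_cast at this; convert this using 1
  have h4c : (1:ℂ) - 4*(ε:ℂ) ≠ 0 := by
    have := Complex.ofReal_ne_zero.mpr (ne_of_gt hd4)
    push_cast at this; convert this using 1
  set mc : ℂ := (((1 - 4*ε + 8*ε^2)/(1 - 2*ε) : ℝ) : ℂ) with hmc
  set yc : ℂ := ((1 - 4*ε : ℝ) : ℂ) with hyc
  have hX : V σX = mc • σX := by
    have h : ((1 - 2*ε : ℝ) : ℂ) • V σX = ((1 - 4*ε + 8*ε^2 : ℝ) : ℂ) • σX := by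
      rw [← hlin.map_smul, ← lam1_X, ← hV, lam2_X]
    have h2' := congrArg (fun M => ((1 - 2*ε : ℝ) : ℂ)⁻¹ • M) h
    simp only [smul_smul, inv_mul_cancel₀ hne2, one_smul] at h2'
    rw [h2']
    congr 1
    rw [hmc]
    push_cast
    field_simp [h2c]
  have hZ : V σZ = mc • σZ := by
    have h : ((1 - 2*ε : ℝ) : ℂ) • V σZ = ((1 - 4*ε + 8*ε^2 : ℝ) : ℂ) • σZ := by
      rw [← hlin.map_smul, ← lam1_Z, ← hV, lam2_Z]
    have h2' := congrArg (fun M => ((1 - 2*ε : ℝ) : ℂ)⁻¹ • M) h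
    simp only [smul_smul, inv_mul_cancel₀ hne2, one_smul] at h2'
    rw [h2']
    congr 1
    rw [hmc]
    push_cast
    field_simp [h2c]
  have hY : V σY = yc • σY := by
    have h : ((1 - 4*ε : ℝ) : ℂ) • V σY = (((1 - 4*ε)^2 : ℝ) : ℂ) • σY := by
      rw [← hlin.map_smul, ← lam1_Y, ← hV, lam2_Y]
    have h2' := congrArg (fun M => ((1 - 4*ε : ℝ) : ℂ)⁻¹ • M) h
    simp only [smul_smul, inv_mul_cancel₀ (Complex.ofReal_ne_zero.mpr (ne_of_gt hd4)), one_smul] at h2'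
    rw [h2']
    congr 1
    rw [hyc]
    push_cast
    field_simp [h4c]
  have hOne : V 1 = 1 := by
    have := hV 1
    rw [lam1_one, lam2_one] at this
    exact this.symm
  have hE00 : V (Matrix.single (0:Fin 2) (0:Fin 2) (1:ℂ))
      = !![(1+mc)/2, 0; 0, (1-mc)/2] := by
    rw [E00_eq, hlin.map_smul, hlin.map_add, hOne, hZ]
    ext i j
    fin_cases i <;> fin_cases j <;> simp [σZ, Matrix.one_apply] <;> ring
  have hE11 : V (Matrix.single (1:Fin 2) (1:Fin 2) (1:ℂ))
      = !![(1-mc)/2, 0; 0, (1+mc)/2] := by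
    rw [E11_eq, hlin.map_smul, hlin.map_sub, hOne, hZ]
    ext i j
    fin_cases i <;> fin_cases j <;> simp [σZ, Matrix.one_apply] <;> ring
  have hE01 : V (Matrix.single (0:Fin 2) (1:Fin 2) (1:ℂ))
      = !![0, (mc+yc)/2; (mc-yc)/2, 0] := by
    rw [E01_eq, hlin.map_smul, hlin.map_add, hlin.map_smul, hX, hY]
    ext i j
    fin_cases i <;> fin_cases j <;> simp [σX, σY] <;> ring_nf <;>
      simp [Complex.I_sq] <;> ring
  have hE10 : V (Matrix.single (1:Fin 2) (0:Fin 2) (1:ℂ))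
      = !![0, (mc-yc)/2; (mc+yc)/2, 0] := by
    rw [E10_eq, hlin.map_smul, hlin.map_sub, hlin.map_smul, hX, hY]
    ext i j
    fin_cases i <;> fin_cases j <;> simp [σX, σY] <;> ring_nf <;>
      simp [Complex.I_sq] <;> ring
  refine ⟨hX, hY, hZ, ?_, ?_, ?_⟩
  · refine ⟨fun p => !![0, 1; (-1:ℂ), 0] p.1 p.2, ?_, ?_⟩
    · intro h0
      have := congrFun h0 (0, 1)
      simp at this
    · funext p
      obtain ⟨a, b⟩ := p
      fin_cases a <;> fin_cases b <;>
        simp [choi, Matrix.mulVec, dotProduct, Fintype.sum_prod_type, Fin.sum_univ_two,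
          hE00, hE01, hE10, hE11] <;>
        (rw [hmc, hyc]; push_cast; field_simp [h2c]; ring)
  · rintro μ ⟨w, hw0, hww⟩
    have e1 := congrFun hww ((0:Fin 2), (0:Fin 2))
    have e2 := congrFun hww ((0:Fin 2), (1:Fin 2))
    have e3 := congrFun hww ((1:Fin 2), (0:Fin 2))
    have e4 := congrFun hww ((1:Fin 2), (1:Fin 2))
    simp [choi, Matrix.mulVec, dotProduct, Fintype.sum_prod_type, Fin.sum_univ_two,
      hE00, hE01, hE10, hE11] at e1 e2 e3 e4
    rw [hmc, hyc] at e1 e2 e3 e4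
    push_cast at e1 e2 e3 e4
    have hζε := zeta_le_eps ε h1 h2
    have hζq := zeta_le_q0 ε h1 h2
    have s3 : ((1 - 2*((1 - 4*(ε:ℂ) + 8*(ε:ℂ)^2)/(1 - 2*(ε:ℂ))) + (1 - 4*(ε:ℂ)))/4 - (μ:ℂ))
        * (w (0,1) - w (1,0)) = 0 := by linear_combination e2 - e3
    have s4 : ((ε:ℂ) - (μ:ℂ)) * (w (0,1) + w (1,0)) = 0 := by linear_combination e2 + e3
    have s1 : ((1 + 2*((1 - 4*(ε:ℂ) + 8*(ε:ℂ)^2)/(1 - 2*(ε:ℂ))) + (1 - 4*(ε:ℂ)))/4 - (μ:ℂ))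
        * (w 0 + w 1) = 0 := by linear_combination e1 + e4
    have s2 : ((ε:ℂ) - (μ:ℂ)) * (w 0 - w 1) = 0 := by linear_combination e1 - e4
    have hμε : (μ:ℂ) = ((ε:ℝ):ℂ) → ((1 - 2*((1 - 4*ε + 8*ε^2)/(1 - 2*ε)) + (1 - 4*ε))/4 : ℝ) ≤ μ := by
      intro h
      have : μ = ε := by exact_mod_cast h
      linarith
    rcases mul_eq_zero.mp s3 with h | hBC
    · rw [sub_eq_zero] at h
      have hμ : μ = ((1 - 2*((1 - 4*ε + 8*ε^2)/(1 - 2*ε)) + (1 - 4*ε))/4 : ℝ) := by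
        have : (μ:ℂ) = (((1 - 2*((1 - 4*ε + 8*ε^2)/(1 - 2*ε)) + (1 - 4*ε))/4 : ℝ) : ℂ) := by
          rw [← h]; push_cast; ring
        exact_mod_cast this
      linarith
    rcases mul_eq_zero.mp s4 with h | hBC' 
    · exact hμε (sub_eq_zero.mp h).symm
    rcases mul_eq_zero.mp s1 with h | hAD
    · rw [sub_eq_zero] at h
      have hμ : μ = ((1 + 2*((1 - 4*ε + 8*ε^2)/(1 - 2*ε)) + (1 - 4*ε))/4 : ℝ) := by
        have : (μ:ℂ) = (((1 + 2*((1 - 4*ε + 8*ε^2)/(1 - 2*ε)) + (1 - 4*ε))/4 : ℝ) : ℂ) := by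
          rw [← h]; push_cast; ring
        exact_mod_cast this
      linarith
    rcases mul_eq_zero.mp s2 with h | hAD'
    · exact hμε (sub_eq_zero.mp h).symm
    exfalso
    apply hw0
    funext p
    have hB : w (0,1) = 0 := by linear_combination (hBC + hBC')/2
    have hC : w (1,0) = 0 := by linear_combination (hBC' - hBC)/2
    have hA : w 0 = 0 := by linear_combination (hAD + hAD')/2
    have hD : w 1 = 0 := by linear_combination (hAD - hAD')/2
    fin_cases p
    · exact hA
    · exact hB
    · exact hC
    · exact hD
  · -- strict negativity
    have key : ((1 - 2*((1 - 4*ε + 8*ε^2)/(1 - 2*ε)) + (1 - 4*ε))/4 : ℝ)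
        = -2*ε^2/(1 - 2*ε) := by
      field_simp
      ring
    rw [key]
    apply div_neg_of_neg_of_pos _ hd2
    nlinarith
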